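/- Let X and Y be Banach spaces and let ψ, φ : B(X) → B(Y) be algebra homomorphisms with ‖ψ(A) − φ(A)‖ < ‖A‖ for every non-zero A ∈ B(X). If P ∈ B(X) is an idempotent of norm one, then the ranges of ψ(P) and φ(P) are isomorphic as Banach spaces. -/

import Mathlib

/-- If `ψ, φ : B(X) → B(Y)` are algebra homomorphisms with `‖ψ(A) - φ(A)‖ < ‖A‖` for every
non-zero `A`, and `P ∈ B(X)` is an idempotent of norm one, then the ranges of `ψ(P)` and
`φ(P)` are isomorphic (linearly homeomorphic) Banach spaces. -/
theorem ranges_of_perturbed_idempotents_isomorphic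
    {X Y : Type*}
    [NormedAddCommGroup X] [NormedSpace ℂ X] [CompleteSpace X]
    [NormedAddCommGroup Y] [NormedSpace ℂ Y] [CompleteSpace Y]
    (ψ φ : (X →L[ℂ] X) →ₙₐ[ℂ] (Y →L[ℂ] Y))
    (hclose : ∀ A : X →L[ℂ] X, A ≠ 0 → ‖ψ A - φ A‖ < ‖A‖)
    (P : X →L[ℂ] X) (hP : IsIdempotentElem P) (hPnorm : ‖P‖ = 1) :
    Nonempty ((LinearMap.range (ψ P : Y →ₗ[ℂ] Y)) ≃L[ℂ] (LinearMap.range (φ P : Y →ₗ[ℂ] Y))) := by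
  set p := ψ P with hpdef
  set q := φ P with hqdef
  have hp : p * p = p := by rw [hpdef, ← map_mul, hP]
  have hq : q * q = q := by rw [hqdef, ← map_mul, hP]
  have hPne : P ≠ 0 := fun h => by simp [h] at hPnorm
  have hlt : ‖p - q‖ < 1 := by
    have := hclose P hPne; rwa [hPnorm] at this
  have ht : ‖(p - q) * (p - q)‖ < 1 :=
    lt_of_le_of_lt (norm_mul_le _ _) (by nlinarith [norm_nonneg (p - q)])
  set c : (Y →L[ℂ] Y)ˣ := Units.oneSub ((p - q) * (p - q)) ht with hcdef
  have hcval : (c : Y →L[ℂ] Y) = 1 - (p - q) * (p - q) := rfl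
  have hp' : ∀ x : Y →L[ℂ] Y, p * (p * x) = p * x := fun x => by rw [← mul_assoc, hp]
  have hq' : ∀ x : Y →L[ℂ] Y, q * (q * x) = q * x := fun x => by rw [← mul_assoc, hq]
  have hcp : (c : Y →L[ℂ] Y) * p = p * (q * p) := by
    rw [hcval]
    simp only [sub_mul, mul_sub, mul_one, one_mul, mul_assoc, hp', hq', hp, hq]
    abel
  have hpc : p * (c : Y →L[ℂ] Y) = p * (q * p) := by
    rw [hcval]
    simp only [sub_mul, mul_sub, mul_one, one_mul, mul_assoc, hp', hq', hp, hq]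
    abel
  have hcq : (c : Y →L[ℂ] Y) * q = q * (p * q) := by
    rw [hcval]
    simp only [sub_mul, mul_sub, mul_one, one_mul, mul_assoc, hp', hq', hp, hq]
    abel
  have hqc : q * (c : Y →L[ℂ] Y) = q * (p * q) := by
    rw [hcval]
    simp only [sub_mul, mul_sub, mul_one, one_mul, mul_assoc, hp', hq', hp, hq]
    abel
  have hcommp : Commute (c : Y →L[ℂ] Y) p := by
    unfold Commute SemiconjBy; rw [hcp, ← hpc]
  have hcommq : Commute (c : Y →L[ℂ] Y) q := by
    unfold Commute SemiconjBy; rw [hcq, ← hqc]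
  have hcommp' : Commute ((c⁻¹ : (Y →L[ℂ] Y)ˣ) : Y →L[ℂ] Y) p := hcommp.units_inv_left
  have hcommq' : Commute ((c⁻¹ : (Y →L[ℂ] Y)ˣ) : Y →L[ℂ] Y) q := hcommq.units_inv_left
  set ci : Y →L[ℂ] Y := ((c⁻¹ : (Y →L[ℂ] Y)ˣ) : Y →L[ℂ] Y) with hcidef
  have hciq : ci * q = q * ci := hcommq'.eq
  have hcip : ci * p = p * ci := hcommp'.eq
  have hcci : (c : Y →L[ℂ] Y) * ci = 1 := c.mul_inv
  have hba : (p * (q * ci)) * (q * p) = p := by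
    calc (p * (q * ci)) * (q * p)
        = p * (q * ((ci * q) * p)) := by simp only [mul_assoc]
    _ = p * (q * (q * (ci * p))) := by rw [hciq, mul_assoc]
    _ = p * (q * (p * ci)) := by rw [hq', hcip]
    _ = (p * (q * p)) * ci := by simp only [mul_assoc]
    _ = ((c : Y →L[ℂ] Y) * p) * ci := by rw [hcp]
    _ = (p * (c : Y →L[ℂ] Y)) * ci := by rw [hcommp.eq]
    _ = p * ((c : Y →L[ℂ] Y) * ci) := by rw [mul_assoc]
    _ = p := by rw [hcci, mul_one]
  have hab : (q * p) * (p * (q * ci)) = q := by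
    calc (q * p) * (p * (q * ci))
        = q * (p * (p * (q * ci))) := by simp only [mul_assoc]
    _ = q * (p * (q * ci)) := by rw [hp']
    _ = (q * (p * q)) * ci := by simp only [mul_assoc]
    _ = (q * (c : Y →L[ℂ] Y)) * ci := by rw [hqc]
    _ = q * ((c : Y →L[ℂ] Y) * ci) := by rw [mul_assoc]
    _ = q := by rw [hcci, mul_one]
  have hmema : ∀ x : Y, (q * p) x ∈ LinearMap.range (q : Y →ₗ[ℂ] Y) := fun x =>
    ⟨p x, by simp [ContinuousLinearMap.mul_apply]⟩
  have hmemb : ∀ x : Y, (p * (q * ci)) x ∈ LinearMap.range (p : Y →ₗ[ℂ] Y) := fun x =>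
    ⟨(q * ci) x, by simp [ContinuousLinearMap.mul_apply]⟩
  have hfixp : ∀ x : Y, x ∈ LinearMap.range (p : Y →ₗ[ℂ] Y) → p x = x := by
    rintro x ⟨z, rfl⟩
    have := DFunLike.congr_fun hp z
    simpa [ContinuousLinearMap.mul_apply] using this
  have hfixq : ∀ x : Y, x ∈ LinearMap.range (q : Y →ₗ[ℂ] Y) → q x = x := by
    rintro x ⟨z, rfl⟩
    have := DFunLike.congr_fun hq z
    simpa [ContinuousLinearMap.mul_apply] using this
  let f : (LinearMap.range (p : Y →ₗ[ℂ] Y)) →L[ℂ] (LinearMap.range (q : Y →ₗ[ℂ] Y)) :=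
    ContinuousLinearMap.codRestrict ((q * p).comp (LinearMap.range (p : Y →ₗ[ℂ] Y)).subtypeL) _
      (fun x => hmema x)
  let g : (LinearMap.range (q : Y →ₗ[ℂ] Y)) →L[ℂ] (LinearMap.range (p : Y →ₗ[ℂ] Y)) :=
    ContinuousLinearMap.codRestrict ((p * (q * ci)).comp (LinearMap.range (q : Y →ₗ[ℂ] Y)).subtypeL) _
      (fun x => hmemb x)
  refine ⟨ContinuousLinearEquiv.equivOfInverse f g ?_ ?_⟩
  · intro x
    apply Subtype.ext
    show (p * (q * ci)) ((q * p) (x : Y)) = (x : Y)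
    have h1 : ((p * (q * ci)) * (q * p)) (x : Y) = p (x : Y) := by rw [hba]
    rw [ContinuousLinearMap.mul_apply] at h1
    rw [h1]
    exact hfixp _ x.2
  · intro y
    apply Subtype.ext
    show (q * p) ((p * (q * ci)) (y : Y)) = (y : Y)
    have h1 : ((q * p) * (p * (q * ci))) (y : Y) = q (y : Y) := by rw [hab]
    rw [ContinuousLinearMap.mul_apply] at h1
    rw [h1]
    exact hfixq _ y.2
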